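/- Let S and R be finite sets, N a real S×R matrix, W = range(N), W^⊥ = ker(Nᵀ), and fix distinct i, o ∈ S. Then the supremum of the set {u_o : u is elementary in W^⊥ and u_i = 1} ∪ {0} equals the supremum of the set {w_i : w is elementary in W and w_o = −1} ∪ {0}. -/

import Mathlib

open Matrix

/-- A vector `v` is elementary in a linear subspace `V ⊆ ℝ^S` if `v ∈ V`, `v ≠ 0`, and no
nonzero `v' ∈ V` has support strictly contained in the support of `v`. -/
def IsElementary {S : Type*} (V : Submodule ℝ (S → ℝ)) (v : S → ℝ) : Prop :=
  v ∈ V ∧ v ≠ 0 ∧ ∀ v' ∈ V, v' ≠ 0 → ¬ Function.support v' ⊂ Function.support v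

namespace SupElemAux

open Function
open scoped RealInnerProductSpace

variable {S : Type*} [Fintype S]

lemma inner_eq_dot (x y : EuclideanSpace ℝ S) :
    ⟪x, y⟫ = (fun s => x s) ⬝ᵥ (fun s => y s) := by
  simp [PiLp.inner_apply, dotProduct, RCLike.inner_apply, mul_comm]

/-- The submodule of `EuclideanSpace ℝ S` corresponding to a submodule of `S → ℝ`. -/
noncomputable def subE (V : Submodule ℝ (S → ℝ)) : Submodule ℝ (EuclideanSpace ℝ S) :=
  V.comap (WithLp.linearEquiv 2 ℝ (S → ℝ)).toLinearMap

lemma mem_subE {V : Submodule ℝ (S → ℝ)} {x : EuclideanSpace ℝ S} :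
    x ∈ subE V ↔ (fun s => x s) ∈ V := Iff.rfl

lemma isElementary_smul {V : Submodule ℝ (S → ℝ)} {v : S → ℝ} (hv : IsElementary V v)
    {c : ℝ} (hc : c ≠ 0) : IsElementary V (c • v) := by
  refine ⟨V.smul_mem c hv.1, smul_ne_zero hc hv.2.1, ?_⟩
  intro v' hv' hne hsub
  rw [Function.support_const_smul_of_ne_zero c v hc] at hsub
  exact hv.2.2 v' hv' hne hsub

lemma isElementary_neg {V : Submodule ℝ (S → ℝ)} {v : S → ℝ} (hv : IsElementary V v) :
    IsElementary V (-v) := by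
  have := isElementary_smul hv (c := -1) (by norm_num)
  simpa using this

/-- If every `v ∈ V` vanishing on `D` has `v o = 0`, then (in finite dimension) there is
`y` orthogonal to `V` with `y o = 1` supported in `D ∪ {o}`. -/
lemma exists_perp_vector (V V' : Submodule ℝ (S → ℝ))
    (hfull : ∀ y : S → ℝ, (∀ v ∈ V, y ⬝ᵥ v = 0) → y ∈ V')
    (D : Set S) (o : S) (ho : o ∉ D)
    (h : ∀ v ∈ V, (∀ s ∈ D, v s = 0) → v o = 0) :
    ∃ y ∈ V', y o = 1 ∧ ∀ s, s ≠ o → s ∉ D → y s = 0 := by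
  classical
  set VE : Submodule ℝ (EuclideanSpace ℝ S) := subE V with hVE
  let K : Submodule ℝ (EuclideanSpace ℝ S) :=
    { carrier := {y | ∀ s, s ∉ D → y s = 0}
      add_mem' := fun ha hb s hs => by
        simp only [PiLp.add_apply, ha s hs, hb s hs, add_zero]
      zero_mem' := fun s _ => rfl
      smul_mem' := fun c a ha s hs => by simp only [PiLp.smul_apply, ha s hs, smul_zero] }
  have hKmem : ∀ x : EuclideanSpace ℝ S, x ∈ K ↔ ∀ s, s ∉ D → x s = 0 := fun _ => Iff.rfl
  have hKperp : ∀ x : EuclideanSpace ℝ S, x ∈ Kᗮ ↔ ∀ s ∈ D, x s = 0 := by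
    intro x
    constructor
    · intro hx s hs
      have h1 : EuclideanSpace.single s (1 : ℝ) ∈ K := by
        rw [hKmem]
        intro t ht
        rw [EuclideanSpace.single_apply]
        have : ¬ t = s := fun hh => ht (hh ▸ hs)
        simp [this]
      have h2 := (Submodule.mem_orthogonal K x).1 hx _ h1
      rwa [EuclideanSpace.inner_single_left, conj_trivial, one_mul] at h2
    · intro hx
      rw [Submodule.mem_orthogonal]
      intro u hu
      rw [PiLp.inner_apply]
      refine Finset.sum_eq_zero fun s _ => ?_
      by_cases hs : s ∈ D
      · simp [hx s hs]
      · simp [(hKmem u).1 hu s hs]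
  have hUo : EuclideanSpace.single o (1 : ℝ) ∈ (VE ⊓ Kᗮ)ᗮ := by
    rw [Submodule.mem_orthogonal']
    intro v hv
    rw [EuclideanSpace.inner_single_left, conj_trivial, one_mul]
    exact h _ (mem_subE.1 hv.1) ((hKperp v).1 hv.2)
  have hdecomp : EuclideanSpace.single o (1 : ℝ) ∈ VEᗮ ⊔ K := by
    have h1 : VE ⊓ Kᗮ = (VEᗮ ⊔ K)ᗮ := by
      rw [← Submodule.inf_orthogonal, Submodule.orthogonal_orthogonal]
    rw [h1, Submodule.orthogonal_orthogonal] at hUo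
    exact hUo
  obtain ⟨y, hy, k, hk, hyk⟩ := Submodule.mem_sup.1 hdecomp
  have happ : ∀ s, y s + k s = EuclideanSpace.single o (1 : ℝ) s := by
    intro s; rw [← hyk]; rfl
  refine ⟨fun s => y s, ?_, ?_, ?_⟩
  · apply hfull
    intro v hv
    have hvE : (WithLp.toLp 2 v) ∈ VE := mem_subE.2 hv
    have h0 := (Submodule.mem_orthogonal' VE y).1 hy _ hvE
    rw [inner_eq_dot] at h0
    exact h0
  · have h1 := happ o
    have h2 : k o = 0 := (hKmem k).1 hk o ho
    rw [h2, add_zero, EuclideanSpace.single_apply] at h1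
    simpa using h1
  · intro s hso hsD
    have h1 := happ s
    have h2 : k s = 0 := (hKmem k).1 hk s hsD
    rw [h2, add_zero, EuclideanSpace.single_apply] at h1
    simpa [hso] using h1

/-- Double dot-orthogonal complement: if `y` is orthogonal to everything orthogonal to `V`,
then `y ∈ V`. -/
lemma mem_of_dot_perp (V V' : Submodule ℝ (S → ℝ))
    (hV' : ∀ y : S → ℝ, (∀ v ∈ V, y ⬝ᵥ v = 0) → y ∈ V')
    (y : S → ℝ) (hy : ∀ v ∈ V', y ⬝ᵥ v = 0) : y ∈ V := by
  classical
  have hmem : (WithLp.toLp 2 y) ∈ (subE V)ᗮᗮ := by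
    rw [Submodule.mem_orthogonal]
    intro u hu
    have hu' : (fun s => u s) ∈ V' := by
      apply hV'
      intro v hv
      have h0 := (Submodule.mem_orthogonal' (subE V) u).1 hu _ (mem_subE.2 hv)
      rw [inner_eq_dot] at h0
      exact h0
    have h1 := hy _ hu'
    rw [inner_eq_dot]
    rw [dotProduct_comm] at h1
    exact h1
  rw [Submodule.orthogonal_orthogonal] at hmem
  exact mem_subE.1 hmem

/-- Core lemma: for an elementary `u` in the dot-orthogonal complement `V'` of `V` with
`u i = 1` and `u o ≠ 0`, there is an elementary `w ∈ V` with `w o = -1` and `w i = u o`. -/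
lemma core (V V' : Submodule ℝ (S → ℝ))
    (hperp : ∀ y ∈ V', ∀ v ∈ V, y ⬝ᵥ v = 0)
    (hfull : ∀ y : S → ℝ, (∀ v ∈ V, y ⬝ᵥ v = 0) → y ∈ V')
    {i o : S} (hio : i ≠ o) {u : S → ℝ}
    (hu : IsElementary V' u) (hui : u i = 1) (huo : u o ≠ 0) :
    ∃ w, IsElementary V w ∧ w o = -1 ∧ w i = u o := by
  classical
  set D : Set S := {s | u s ≠ 0 ∧ s ≠ i ∧ s ≠ o} with hD
  have hoD : o ∉ D := fun hh => hh.2.2 rfl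
  have hiD : i ∉ D := fun hh => hh.2.1 rfl
  -- The class of candidate vectors is nonempty
  have hC : ∃ v, v ∈ V ∧ v o ≠ 0 ∧ ∀ s ∈ D, v s = 0 := by
    by_contra hc
    push_neg at hc
    have h : ∀ v ∈ V, (∀ s ∈ D, v s = 0) → v o = 0 := by
      intro v hv hvD
      by_contra h0
      obtain ⟨s, hs, hns⟩ := hc v hv h0
      exact hns (hvD s hs)
    obtain ⟨y, hy, hyo, hys⟩ := exists_perp_vector V V' hfull D o hoD h
    have hyne : y ≠ 0 := by
      intro h0
      rw [h0] at hyo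
      simpa using hyo
    apply hu.2.2 y hy hyne
    have hsub : Function.support y ⊆ Function.support u := by
      intro s hs
      by_cases hsD : s ∈ D
      · exact hsD.1
      · by_cases hso : s = o
        · subst hso; exact huo
        · exact absurd (hys s hso hsD) hs
    have hi1 : i ∈ Function.support u := by
      simp only [Function.mem_support, hui]; norm_num
    have hi2 : i ∉ Function.support y := by
      simp only [Function.mem_support, not_not]
      exact hys i hio hiD
    exact (Set.ssubset_iff_of_subset hsub).2 ⟨i, hi1, hi2⟩
  -- pick a candidate with minimal support
  set P : (S → ℝ) → Prop := fun v => v ∈ V ∧ v o ≠ 0 ∧ ∀ s ∈ D, v s = 0 with hP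
  set T : Set ℕ := {n | ∃ v, P v ∧ (Function.support v).ncard = n} with hT
  have hTne : T.Nonempty := by
    obtain ⟨v, hv⟩ := hC
    exact ⟨_, v, hv, rfl⟩
  obtain ⟨w, hwP, hwcard⟩ := Nat.sInf_mem hTne
  have hmin : ∀ v, P v → (Function.support w).ncard ≤ (Function.support v).ncard := by
    intro v hv
    rw [hwcard]
    exact Nat.sInf_le ⟨v, hv, rfl⟩
  have hwne : w ≠ 0 := by
    intro h0
    apply hwP.2.1
    rw [h0]
    rfl
  -- w is elementary
  have helem : IsElementary V w := by
    refine ⟨hwP.1, hwne, ?_⟩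
    intro v' hv' hv'ne hss
    by_cases hvo : v' o = 0
    · -- support-reduction: subtract a multiple of v' from w
      obtain ⟨s, hs⟩ := Function.support_nonempty_iff.2 hv'ne
      have hvs : v' s ≠ 0 := hs
      set t : ℝ := w s / v' s with ht
      set w' : S → ℝ := w - t • v' with hw'
      have hw's : w' s = 0 := by
        simp only [hw', Pi.sub_apply, Pi.smul_apply, smul_eq_mul, ht]
        field_simp
        simp
      have hsupp : Function.support w' ⊆ Function.support w := by
        intro x hx
        by_contra hxw
        simp only [Function.mem_support, not_not] at hxw
        have hxv : v' x = 0 := by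
          by_contra hxv
          exact (hss.subset hxv) hxw
        apply hx
        simp [hw', hxw, hxv]
      have hsw : s ∈ Function.support w := hss.subset hs
      have hssw : Function.support w' ⊂ Function.support w := by
        exact (Set.ssubset_iff_of_subset hsupp).2 ⟨s, hsw, by simp [Function.mem_support, hw's]⟩
      have hPw' : P w' := by
        refine ⟨V.sub_mem hwP.1 (V.smul_mem t hv'), ?_, ?_⟩
        · simp only [hw', Pi.sub_apply, Pi.smul_apply, smul_eq_mul, hvo, mul_zero, sub_zero]
          exact hwP.2.1
        · intro x hx
          have h1 : w x = 0 := hwP.2.2 x hx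
          have h2 : v' x = 0 := by
            by_contra h2
            exact (hss.subset h2) h1
          simp [hw', h1, h2]
      have := hmin w' hPw'
      have hlt := Set.ncard_lt_ncard hssw (Set.toFinite _)
      omega
    · -- v' itself is a smaller candidate
      have hPv' : P v' := by
        refine ⟨hv', hvo, ?_⟩
        intro x hx
        have h1 : w x = 0 := hwP.2.2 x hx
        by_contra h2
        exact (hss.subset h2) h1
      have := hmin v' hPv'
      have hlt := Set.ncard_lt_ncard hss (Set.toFinite _)
      omega
  -- scale w
  have hwo : w o ≠ 0 := hwP.2.1
  set c : ℝ := -(w o)⁻¹ with hc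
  have hcne : c ≠ 0 := by
    simp [hc, inv_ne_zero hwo]
  refine ⟨c • w, isElementary_smul helem hcne, ?_, ?_⟩
  · simp only [Pi.smul_apply, smul_eq_mul, hc]
    field_simp
  · -- orthogonality gives the value at i
    have hdot : u ⬝ᵥ (c • w) = 0 := hperp u hu.1 _ (V.smul_mem c hwP.1)
    have hco : (c • w) o = -1 := by
      simp only [Pi.smul_apply, smul_eq_mul, hc]
      field_simp
    have hvanish : ∀ x ∈ Finset.univ, x ∉ ({i, o} : Finset S) → u x * (c • w) x = 0 := by
      intro x _ hx
      simp only [Finset.mem_insert, Finset.mem_singleton, not_or] at hx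
      by_cases hux : u x = 0
      · simp [hux]
      · have hxD : x ∈ D := ⟨hux, hx.1, hx.2⟩
        have : w x = 0 := hwP.2.2 x hxD
        simp [this]
    have hsum : u ⬝ᵥ (c • w) = u i * (c • w) i + u o * (c • w) o := by
      rw [dotProduct, ← Finset.sum_subset (Finset.subset_univ ({i, o} : Finset S)) hvanish,
        Finset.sum_pair hio]
    rw [hsum, hco, hui, one_mul] at hdot
    linarith

end SupElemAux

open SupElemAux in
/-- Lemma 3.11 (`lem:u_w`): the supremum of `u_o` over elementary `u ∈ W^⊥` with `u_i = 1`
(together with `0`) equals the supremum of `w_i` over elementary `w ∈ W` with `w_o = −1`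
(together with `0`). -/
theorem sup_elementary_perp_eq_sup_elementary
    {S R : Type*} [Fintype S] [Fintype R]
    (N : Matrix S R ℝ) (i o : S) (hio : i ≠ o) :
    sSup ({x : ℝ | ∃ u : S → ℝ,
        IsElementary (LinearMap.ker Nᵀ.mulVecLin) u ∧ u i = 1 ∧ x = u o} ∪ {0}) =
    sSup ({x : ℝ | ∃ w : S → ℝ,
        IsElementary (LinearMap.range N.mulVecLin) w ∧ w o = -1 ∧ x = w i} ∪ {0}) := by
  classical
  set Wr : Submodule ℝ (S → ℝ) := LinearMap.range N.mulVecLin with hWr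
  set Wk : Submodule ℝ (S → ℝ) := LinearMap.ker Nᵀ.mulVecLin with hWk
  have key : ∀ y : S → ℝ, y ∈ Wk ↔ ∀ v ∈ Wr, y ⬝ᵥ v = 0 := by
    intro y
    constructor
    · rintro hy v ⟨x, rfl⟩
      have h0 : Nᵀ *ᵥ y = 0 := hy
      rw [Matrix.mulVecLin_apply, Matrix.dotProduct_mulVec, ← Matrix.mulVec_transpose, h0,
        zero_dotProduct]
    · intro h
      have h1 : ∀ x : R → ℝ, (Nᵀ *ᵥ y) ⬝ᵥ x = 0 := by
        intro x
        have h2 := h (N.mulVecLin x) ⟨x, rfl⟩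
        rwa [Matrix.mulVecLin_apply, Matrix.dotProduct_mulVec, ← Matrix.mulVec_transpose] at h2
      have h3 := h1 (Nᵀ *ᵥ y)
      have h4 : Nᵀ *ᵥ y = 0 := dotProduct_self_eq_zero.1 h3
      exact h4
  have hperp1 : ∀ y ∈ Wk, ∀ v ∈ Wr, y ⬝ᵥ v = 0 := fun y hy => (key y).1 hy
  have hfull1 : ∀ y : S → ℝ, (∀ v ∈ Wr, y ⬝ᵥ v = 0) → y ∈ Wk := fun y h => (key y).2 h
  have hperp2 : ∀ y ∈ Wr, ∀ v ∈ Wk, y ⬝ᵥ v = 0 := by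
    intro y hy v hv
    rw [dotProduct_comm]
    exact (key v).1 hv y hy
  have hfull2 : ∀ y : S → ℝ, (∀ v ∈ Wk, y ⬝ᵥ v = 0) → y ∈ Wr :=
    fun y h => mem_of_dot_perp Wr Wk hfull1 y h
  congr 1
  ext x
  simp only [Set.mem_union, Set.mem_setOf_eq, Set.mem_singleton_iff]
  constructor
  · rintro (⟨u, hu, hui, rfl⟩ | rfl)
    · by_cases h0 : u o = 0
      · right; exact h0
      · left
        obtain ⟨w, hw, hwo, hwi⟩ := core Wr Wk hperp1 hfull1 hio hu hui h0
        exact ⟨w, hw, hwo, hwi.symm⟩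
    · right; rfl
  · rintro (⟨w, hw, hwo, rfl⟩ | rfl)
    · by_cases h0 : w i = 0
      · right; exact h0
      · left
        have hw' : IsElementary Wr (-w) := isElementary_neg hw
        have hwo' : (-w) o = 1 := by simp [hwo]
        have hwi' : (-w) i ≠ 0 := by simpa using h0
        obtain ⟨v, hv, hvi, hvo⟩ := core Wk Wr hperp2 hfull2 hio.symm hw' hwo' hwi'
        refine ⟨-v, isElementary_neg hv, ?_, ?_⟩
        · simp [hvi]
        · simp only [Pi.neg_apply, hvo, Pi.neg_apply, neg_neg]
    · right; rfl
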